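/- Let 1 ≤ t ≤ k, let Q = Z_{q_1} × ⋯ × Z_{q_n} and q ≥ 2, and let C be a mixed Steiner system MS(t,k,Q × Z_q), where Q × Z_q is the mixed alphabet obtained by appending one coordinate over Z_q to Q. Then for every nonzero α ∈ Z_q, the set C_α = { c ∈ Q : the word (c,α) with last coordinate α belongs to C } is a mixed Steiner system MS(t−1,k−1,Q). -/

import Mathlib

open Finset

lemma dist_elim {n : ℕ} (x y : Fin n → ℕ) (a b : ℕ) :
    hammingDist (Sum.elim x fun _ : Unit => a) (Sum.elim y fun _ : Unit => b) =
      hammingDist x y + (if a ≠ b then 1 else 0) := by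
  classical
  simp only [hammingDist, Finset.card_filter, Fintype.sum_sum_type]
  simp
  congr 1
  · refine Finset.sum_congr rfl fun i _ => ?_
    split_ifs <;> simp_all
  · split_ifs <;> simp_all

lemma norm_elim {n : ℕ} (x : Fin n → ℕ) (a : ℕ) :
    hammingNorm (Sum.elim x fun _ : Unit => a) =
      hammingNorm x + (if a ≠ 0 then 1 else 0) := by
  classical
  simp only [hammingNorm, Finset.card_filter, Fintype.sum_sum_type]
  simp
  congr 1
  · refine Finset.sum_congr rfl fun i _ => ?_
    split_ifs <;> simp_all
  · split_ifs <;> simp_all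

lemma key {ι : Type*} [Fintype ι] [DecidableEq ι] (x c : ι → ℕ)
    (h : hammingNorm x + hammingDist x c = hammingNorm c) :
    ∀ i, x i ≠ 0 → c i = x i := by
  classical
  set Sx : Finset ι := {i | x i ≠ 0} with hSx
  set D : Finset ι := {i | x i ≠ c i} with hD
  have hsub : ({i | c i ≠ 0} : Finset ι) ⊆ Sx ∪ D := by
    intro i hi
    simp only [hSx, hD, mem_union, mem_filter, mem_univ, true_and] at hi ⊢
    by_cases hx : x i = 0
    · right; rw [hx]; exact fun e => hi e.symm
    · left; exact hx
  have h1 : hammingNorm c ≤ Sx.card + (D \ Sx).card := by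
    calc hammingNorm c ≤ (Sx ∪ D).card := Finset.card_le_card hsub
    _ = Sx.card + (D \ Sx).card := by
        rw [Finset.union_comm, ← Finset.card_sdiff_add_card, Nat.add_comm]
  have hx : hammingNorm x = Sx.card := rfl
  have hd : hammingDist x c = D.card := rfl
  rw [hx, hd] at h
  have h2 : D.card ≤ (D \ Sx).card := by omega
  have h3 : D \ Sx = D :=
    Finset.eq_of_subset_of_card_le (Finset.sdiff_subset) h2
  intro i hxi
  by_contra hne
  have hiD : i ∈ D := by simp only [hD, mem_filter, mem_univ, true_and]; exact fun e => hne e.symm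
  rw [← h3] at hiD
  exact (Finset.mem_sdiff.mp hiD).2 (by simp [hSx, hxi])


/-- A mixed Steiner system MS(t,k,Q) over the mixed alphabet described by `q : ι → ℕ`
(words are functions `x : ι → ℕ` with `x i < q i`): a set `C` of words of Hamming
weight `k` such that every word of Hamming weight `t` is at Hamming distance exactly
`k - t` from exactly one codeword, and distinct codewords are at Hamming distance at
least `2(k-t)+1`. -/
def IsMixedSteiner {ι : Type*} [Fintype ι] [DecidableEq ι] (q : ι → ℕ) (t k : ℕ)
    (C : Set (ι → ℕ)) : Prop :=
  (∀ c ∈ C, (∀ i, c i < q i) ∧ hammingNorm c = k) ∧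
  (∀ x : ι → ℕ, (∀ i, x i < q i) → hammingNorm x = t →
    ∃! c, c ∈ C ∧ hammingDist x c = k - t) ∧
  (∀ c ∈ C, ∀ c' ∈ C, c ≠ c' → 2 * (k - t) + 1 ≤ hammingDist c c')

/-- Deleting the appended coordinate over `Z_q` at a nonzero letter `α` yields
a derived mixed Steiner system MS(t-1, k-1, Q). -/
theorem stmt1 {n : ℕ} (q : Fin n → ℕ) (hq : ∀ i, 2 ≤ q i) (qq : ℕ) (hqq : 2 ≤ qq)
    (t k : ℕ) (ht : 1 ≤ t) (htk : t ≤ k)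
    (C : Set (Fin n ⊕ Unit → ℕ))
    (hC : IsMixedSteiner (Sum.elim q fun _ => qq) t k C)
    (α : ℕ) (hα0 : α ≠ 0) (hα : α < qq) :
    IsMixedSteiner q (t - 1) (k - 1)
      {c : Fin n → ℕ | Sum.elim c (fun _ => α) ∈ C} := by
  obtain ⟨h1, h2, h3⟩ := hC
  refine ⟨?_, ?_, ?_⟩
  · intro c hc
    obtain ⟨hlt, hnorm⟩ := h1 _ hc
    refine ⟨fun i => hlt (Sum.inl i), ?_⟩
    have hne := norm_elim c α
    rw [if_pos hα0, hnorm] at hne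
    omega
  · intro x hx hxnorm
    have hxE : ∀ i, Sum.elim x (fun _ : Unit => α) i < Sum.elim q (fun _ => qq) i := by
      intro i; cases i with
      | inl j => exact hx j
      | inr u => exact hα
    have hnormE : hammingNorm (Sum.elim x fun _ : Unit => α) = t := by
      rw [norm_elim, if_pos hα0, hxnorm]; omega
    obtain ⟨c', ⟨hc'C, hc'd⟩, huniq⟩ := h2 _ hxE hnormE
    have hnc' := (h1 _ hc'C).2
    have hlast : c' (Sum.inr ()) = α := by
      have hk := key (Sum.elim x fun _ : Unit => α) c'
        (by rw [hnormE, hnc', hc'd]; omega) (Sum.inr ()) (by simpa using hα0)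
      simpa using hk
    set c : Fin n → ℕ := fun i => c' (Sum.inl i) with hcdef
    have hEc : Sum.elim c (fun _ : Unit => α) = c' := by
      funext i; cases i with
      | inl j => rfl
      | inr u => cases u; exact hlast.symm
    have hdxc : hammingDist x c = k - t := by
      have hd := dist_elim x c α α
      rw [hEc, hc'd, if_neg (by simp)] at hd
      omega
    refine ⟨c, ⟨?_, ?_⟩, ?_⟩
    · show Sum.elim c (fun _ => α) ∈ C
      rw [hEc]; exact hc'C
    · rw [hdxc]; omega
    · rintro d ⟨hdC, hdd⟩
      have hEd : Sum.elim d (fun _ : Unit => α) = c' := by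
        apply huniq
        refine ⟨hdC, ?_⟩
        rw [dist_elim, if_neg (by simp), hdd]
        omega
      funext i
      have := congrFun hEd (Sum.inl i)
      simpa [hcdef] using this
  · intro c hc c' hc' hne
    have hEne : Sum.elim c (fun _ : Unit => α) ≠ Sum.elim c' (fun _ : Unit => α) := by
      intro e; apply hne; funext i; exact congrFun e (Sum.inl i)
    have := h3 _ hc _ hc' hEne
    rw [dist_elim, if_neg (by simp)] at this
    omega
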